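/- Let T ≥ 1 be an integer, C₁ > 0, θ ∈ (1/2, 1), k₀ ∈ ℕ, and let {Φ_k}_{k∈ℕ} be a nonincreasing sequence of nonnegative reals converging to 0 such that Φ_k − Φ_{k+T} ≥ C₁ Φ_{k+T}^{2θ} for every k ≥ k₀. Then {Φ_k} converges sublinearly at rate O((k+1)^{−1/(2θ−1)}): there exists C₂ > 0 such that Φ_k ≤ C₂ (k+1)^{−1/(2θ−1)} for all k ∈ ℕ. -/
import Mathlib

open Real

-- concavity-type inequality: for 0 < b ≤ a and 0 ≤ γ ≤ 1,
-- γ * a^γ * (a - b) ≤ (a^γ - b^γ) * a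
lemma aux_concave {a b γ : ℝ} (hb : 0 < b) (hab : b ≤ a) (hγ0 : 0 ≤ γ) (hγ1 : γ ≤ 1) :
    γ * a ^ γ * (a - b) ≤ (a ^ γ - b ^ γ) * a := by
  have ha : 0 < a := hb.trans_le hab
  have h0 : (b / a) ^ γ ≤ 1 + γ * (b / a - 1) := by
    have := rpow_one_add_le_one_add_mul_self (s := b / a - 1) (by
      have : 0 ≤ b / a := by positivity
      linarith) hγ0 hγ1
    simpa using this
  rw [div_rpow hb.le ha.le] at h0
  have hA : (0 : ℝ) < a ^ γ := rpow_pos_of_pos ha γ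
  rw [div_le_iff₀ hA] at h0
  have h2 : b / a * a = b := div_mul_cancel₀ _ ha.ne'
  have h0' : b ^ γ * a ≤ a ^ γ * a + γ * a ^ γ * (b - a) := by
    calc b ^ γ * a ≤ (1 + γ * (b / a - 1)) * a ^ γ * a :=
          mul_le_mul_of_nonneg_right h0 ha.le
      _ = a ^ γ * a + γ * a ^ γ * (b / a * a - a) := by ring
      _ = a ^ γ * a + γ * a ^ γ * (b - a) := by rw [h2]
  linarith

-- one-step decrease of the inverse power
lemma aux_step {γ C₁ a b P : ℝ} (hγ0 : 0 < γ) (hγ1 : γ < 1) (hC₁ : 0 < C₁)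
    (hb : 0 < b) (hab : b ≤ a) (haP : a ≤ P)
    (hd' : C₁ * (b ^ γ * b) ≤ a - b) :
    (a ^ γ)⁻¹ + min (γ * C₁ / 2) ((2 ^ γ - 1) * P ^ (-γ)) ≤ (b ^ γ)⁻¹ := by
  have ha : 0 < a := hb.trans_le hab
  have hP : 0 < P := ha.trans_le haP
  have hA : (0 : ℝ) < a ^ γ := rpow_pos_of_pos ha γ
  have hB : (0 : ℝ) < b ^ γ := rpow_pos_of_pos hb γ
  have h2γ : (1 : ℝ) < 2 ^ γ :=
    (one_lt_rpow_iff_of_pos (by norm_num)).2 (Or.inl ⟨one_lt_two, hγ0⟩)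
  by_cases hcase : a ≤ 2 * b
  · have hcmin : min (γ * C₁ / 2) ((2 ^ γ - 1) * P ^ (-γ)) ≤ γ * C₁ / 2 := min_le_left _ _
    have hcv := aux_concave hb hab hγ0.le hγ1.le
    have h1 : γ * a ^ γ * (C₁ * (b ^ γ * b)) ≤ γ * a ^ γ * (a - b) :=
      mul_le_mul_of_nonneg_left hd' (by positivity)
    have hAB : b ^ γ ≤ a ^ γ := rpow_le_rpow hb.le hab hγ0.le
    have h9 := h1.trans hcv
    have h10 : (a ^ γ - b ^ γ) * a ≤ (a ^ γ - b ^ γ) * (2 * b) :=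
      mul_le_mul_of_nonneg_left hcase (sub_nonneg.2 hAB)
    have h11 := h9.trans h10
    have key' : γ * C₁ / 2 * (a ^ γ * b ^ γ) * b ≤ (a ^ γ - b ^ γ) * b := by linarith
    have key : γ * C₁ / 2 * (a ^ γ * b ^ γ) ≤ a ^ γ - b ^ γ :=
      le_of_mul_le_mul_right key' hb
    have h12 : min (γ * C₁ / 2) ((2 ^ γ - 1) * P ^ (-γ)) * (a ^ γ * b ^ γ)
        ≤ a ^ γ - b ^ γ :=
      le_trans (mul_le_mul_of_nonneg_right hcmin (by positivity)) key
    rw [← sub_nonneg]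
    have e2 : (b ^ γ)⁻¹ - ((a ^ γ)⁻¹ + min (γ * C₁ / 2) ((2 ^ γ - 1) * P ^ (-γ)))
        = ((a ^ γ - b ^ γ) - min (γ * C₁ / 2) ((2 ^ γ - 1) * P ^ (-γ)) * (a ^ γ * b ^ γ))
          / (a ^ γ * b ^ γ) := by
      field_simp
      ring
    rw [e2]
    exact div_nonneg (by linarith) (by positivity)
  · push_neg at hcase
    have hcmin : min (γ * C₁ / 2) ((2 ^ γ - 1) * P ^ (-γ)) ≤ (2 ^ γ - 1) * P ^ (-γ) :=
      min_le_right _ _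
    have hb2 : b ≤ a / 2 := by linarith
    have h1 : b ^ γ ≤ (a / 2) ^ γ := rpow_le_rpow hb.le hb2 hγ0.le
    have h2 : (a / 2) ^ γ = a ^ γ * ((2 : ℝ) ^ γ)⁻¹ := by
      rw [div_rpow ha.le (by norm_num), div_eq_mul_inv]
    have h3 : (a ^ γ * ((2 : ℝ) ^ γ)⁻¹)⁻¹ ≤ (b ^ γ)⁻¹ :=
      inv_anti₀ hB (h2 ▸ h1)
    have h4 : (a ^ γ * ((2 : ℝ) ^ γ)⁻¹)⁻¹ = (a ^ γ)⁻¹ * 2 ^ γ := by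
      rw [mul_inv, inv_inv]
    rw [h4] at h3
    have h5 : (P ^ γ)⁻¹ ≤ (a ^ γ)⁻¹ :=
      inv_anti₀ hA (rpow_le_rpow ha.le haP hγ0.le)
    have h6 : P ^ (-γ) = (P ^ γ)⁻¹ := rpow_neg hP.le γ
    rw [h6] at hcmin ⊢
    nlinarith [inv_pos.2 hA, mul_le_mul_of_nonneg_left h5 (by linarith : (0:ℝ) ≤ 2 ^ γ - 1)]

theorem stmt_14 (T : ℕ) (hT : 1 ≤ T) (C₁ : ℝ) (hC₁ : 0 < C₁)
    (θ : ℝ) (hθ : θ ∈ Set.Ioo (1 / 2 : ℝ) 1) (k₀ : ℕ)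
    (Φ : ℕ → ℝ) (hmono : Antitone Φ) (hnonneg : ∀ k, 0 ≤ Φ k)
    (hlim : Filter.Tendsto Φ Filter.atTop (nhds 0))
    (hdec : ∀ k, k₀ ≤ k → C₁ * Φ (k + T) ^ (2 * θ) ≤ Φ k - Φ (k + T)) :
    ∃ C₂ : ℝ, 0 < C₂ ∧ ∀ k : ℕ, Φ k ≤ C₂ * ((k : ℝ) + 1) ^ (-(1 / (2 * θ - 1))) := by
  obtain ⟨hθ1, hθ2⟩ := hθ
  set γ : ℝ := 2 * θ - 1 with hγdef
  have hγ0 : 0 < γ := by rw [hγdef]; linarith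
  have hγ1 : γ < 1 := by rw [hγdef]; linarith
  -- reduce to a tail estimate
  suffices h : ∃ C : ℝ, 0 < C ∧ ∃ N : ℕ, ∀ k, N ≤ k → Φ k ≤ C * ((k : ℝ) + 1) ^ (-(1 / γ)) by
    obtain ⟨C, hC, N, hN⟩ := h
    refine ⟨max C (Φ 0 * ((N : ℝ) + 1) ^ (1 / γ)), lt_of_lt_of_le hC (le_max_left _ _), ?_⟩
    intro k
    by_cases hk : N ≤ k
    · exact (hN k hk).trans (mul_le_mul_of_nonneg_right (le_max_left _ _)
        (rpow_nonneg (by positivity) _))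
    · push_neg at hk
      have hkN : ((k : ℝ) + 1) ≤ (N : ℝ) + 1 := by
        have : (k : ℝ) ≤ (N : ℝ) := Nat.cast_le.2 hk.le
        linarith
      have h1 : ((N : ℝ) + 1) ^ (-(1 / γ)) ≤ ((k : ℝ) + 1) ^ (-(1 / γ)) :=
        rpow_le_rpow_of_nonpos (by positivity) hkN (neg_nonpos.2 (by positivity))
      have e1 : ((N : ℝ) + 1) ^ (1 / γ) * ((N : ℝ) + 1) ^ (-(1 / γ)) = 1 := by
        rw [← rpow_add (by positivity)]; simp
      have hΦ0 : 0 ≤ Φ 0 * ((N : ℝ) + 1) ^ (1 / γ) :=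
        mul_nonneg (hnonneg 0) (rpow_nonneg (by positivity) _)
      calc Φ k ≤ Φ 0 := hmono (Nat.zero_le k)
        _ = Φ 0 * ((N : ℝ) + 1) ^ (1 / γ) * ((N : ℝ) + 1) ^ (-(1 / γ)) := by
            rw [mul_assoc, e1, mul_one]
        _ ≤ Φ 0 * ((N : ℝ) + 1) ^ (1 / γ) * ((k : ℝ) + 1) ^ (-(1 / γ)) :=
            mul_le_mul_of_nonneg_left h1 hΦ0
        _ ≤ max C (Φ 0 * ((N : ℝ) + 1) ^ (1 / γ)) * ((k : ℝ) + 1) ^ (-(1 / γ)) :=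
            mul_le_mul_of_nonneg_right (le_max_right _ _) (rpow_nonneg (by positivity) _)
  by_cases hzero : ∃ m, Φ m = 0
  · obtain ⟨m, hm⟩ := hzero
    refine ⟨1, one_pos, m, fun k hk => ?_⟩
    have h1 : Φ k ≤ 0 := hm ▸ hmono hk
    have h2 : Φ k = 0 := le_antisymm h1 (hnonneg k)
    rw [h2]; positivity
  · push_neg at hzero
    have hpos : ∀ m, 0 < Φ m := fun m => lt_of_le_of_ne (hnonneg m) (Ne.symm (hzero m))
    have h2γ : (1 : ℝ) < 2 ^ γ :=
      (one_lt_rpow_iff_of_pos (by norm_num)).2 (Or.inl ⟨one_lt_two, hγ0⟩)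
    have hc : 0 < min (γ * C₁ / 2) ((2 ^ γ - 1) * (Φ k₀) ^ (-γ)) := lt_min (by positivity)
      (mul_pos (by linarith) (rpow_pos_of_pos (hpos k₀) _))
    set c : ℝ := min (γ * C₁ / 2) ((2 ^ γ - 1) * (Φ k₀) ^ (-γ)) with hcdef
    -- key step inequality
    have hstep : ∀ k, k₀ ≤ k → Φ k ^ (-γ) + c ≤ Φ (k + T) ^ (-γ) := by
      intro k hk
      have ha : 0 < Φ k := hpos k
      have hb : 0 < Φ (k + T) := hpos (k + T)
      have hab : Φ (k + T) ≤ Φ k := hmono (Nat.le_add_right _ _)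
      have hd := hdec k hk
      have hd' : C₁ * (Φ (k + T) ^ γ * Φ (k + T)) ≤ Φ k - Φ (k + T) := by
        have e : (2 : ℝ) * θ = γ + 1 := by rw [hγdef]; ring
        rw [e, rpow_add hb, rpow_one] at hd
        exact hd
      have := aux_step hγ0 hγ1 hC₁ hb hab (hmono hk) hd'
      rw [rpow_neg ha.le, rpow_neg hb.le]
      exact this
    -- iterate
    have hiter : ∀ n : ℕ, (n : ℝ) * c ≤ Φ (k₀ + n * T) ^ (-γ) := by
      intro n
      induction n with
      | zero => simpa using rpow_nonneg (hnonneg k₀) (-γ)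
      | succ n ih =>
        have hs := hstep (k₀ + n * T) (Nat.le_add_right _ _)
        have e : k₀ + (n + 1) * T = k₀ + n * T + T := by ring
        rw [e]
        push_cast
        linarith
    refine ⟨(c / (2 * T)) ^ (-(1 / γ)), rpow_pos_of_pos (by positivity) _, 2 * k₀ + 2 * T,
      fun k hk => ?_⟩
    obtain ⟨n, m, hm, hdm⟩ : ∃ n m, m < T ∧ n * T + m = k - k₀ :=
      ⟨(k - k₀) / T, (k - k₀) % T, Nat.mod_lt _ (by omega), by
        rw [Nat.mul_comm]; exact Nat.div_add_mod _ _⟩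
    have hn1 : k₀ + n * T ≤ k := by omega
    have hψk : (n : ℝ) * c ≤ Φ k ^ (-γ) := by
      refine le_trans (hiter n) ?_
      exact rpow_le_rpow_of_nonpos (hpos k) (hmono hn1) (by linarith)
    have hcount : ((k : ℝ) + 1) / (2 * T) ≤ (n : ℝ) := by
      have hnat : k + 1 ≤ 2 * (n * T) := by omega
      rw [div_le_iff₀ (by positivity)]
      calc ((k : ℝ) + 1) ≤ (2 * (n * T) : ℕ) := by exact_mod_cast Nat.cast_le.2 hnat
        _ = (n : ℝ) * (2 * T) := by push_cast; ring
    have hy : (0 : ℝ) < c / (2 * T) * ((k : ℝ) + 1) := by positivity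
    have hψk2 : c / (2 * T) * ((k : ℝ) + 1) ≤ Φ k ^ (-γ) := by
      have h1 : c / (2 * T) * ((k : ℝ) + 1) = c * (((k : ℝ) + 1) / (2 * T)) := by ring
      have h2 : c * (((k : ℝ) + 1) / (2 * T)) ≤ c * (n : ℝ) :=
        mul_le_mul_of_nonneg_left hcount hc.le
      rw [h1]
      exact h2.trans ((mul_comm c _).le.trans hψk)
    have hfin := rpow_le_rpow_of_nonpos hy hψk2 (neg_nonpos.2 (by positivity) : -(1/γ) ≤ 0)
    have eL : (Φ k ^ (-γ)) ^ (-(1 / γ)) = Φ k := by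
      rw [← rpow_mul (hnonneg k), show (-γ) * (-(1 / γ)) = 1 by field_simp, rpow_one]
    have eR : (c / (2 * T) * ((k : ℝ) + 1)) ^ (-(1 / γ))
        = (c / (2 * T)) ^ (-(1 / γ)) * ((k : ℝ) + 1) ^ (-(1 / γ)) :=
      mul_rpow (by positivity) (by positivity)
    rw [eL, eR] at hfin
    exact hfin
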